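/- Guarded sequential composition is a contraction in its second argument: if P always communicates an event from U before it does a ✓ (every trace of P ending in ✓ contains an event from U before ✓), then for all Q, Q', d_U(P ; Q, P ; Q') ≤ (1/2)·d_U(Q, Q'). -/

import Mathlib

open scoped Classical

namespace CSPLL

variable {E : Type*}

/-- Events: `none` is the termination signal ✓, `some a` is a visible event. -/
abbrev Ev (E : Type*) := Option E

/-- A member of `Σ^{*✓}`: the termination event ✓ may occur only as the last element. -/
def ValidTrace (s : List (Ev E)) : Prop := (none : Ev E) ∉ s.dropLast

/-- The semantic domain `T↓`: pairs `(T, D)` of (behavioural) traces and divergences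
satisfying the axioms of the divergence-strict traces model. -/
structure TD (E : Type*) where
  T : Set (List (Ev E))
  D : Set (List (Ev E))
  valid : ∀ s ∈ T, ValidTrace s
  d_sub : D ⊆ T
  nonempty : [] ∈ T
  prefix_closed : ∀ s t : List (Ev E), s ++ t ∈ T → s ∈ T
  tick_div : ∀ s : List (Ev E), s ++ [none] ∈ D → s ∈ D
  div_ext : ∀ s t : List (Ev E), s ∈ D → (none : Ev E) ∉ s → ValidTrace t → s ++ t ∈ D

/-- Raw trace/divergence pairs. -/
abbrev Pair (E : Type*) := Set (List (Ev E)) × Set (List (Ev E))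

def TD.pair (P : TD E) : Pair E := (P.T, P.D)

/-- `lengthU U s` counts the occurrences of events from `U` in the trace `s`. -/
noncomputable def lengthU (U : Set E) (s : List (Ev E)) : ℕ :=
  (s.filter fun x => decide (∃ a ∈ U, x = some a)).length

/-- Restriction `(T,D) ↾_U n` of a trace/divergence pair to `U`-length `n`. -/
noncomputable def restrict (U : Set E) (n : ℕ) (P : Pair E) : Pair E :=
  let D' := P.2 ∪ {u | ∃ s t, s ∈ P.1 ∧ (none : Ev E) ∉ s ∧ lengthU U s = n ∧
                       ValidTrace t ∧ u = s ++ t}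
  (D' ∪ {s ∈ P.1 | lengthU U s ≤ n}, D')

/-- The metric `d_U(P,Q) = inf {2^{-n} | P ↾_U n = Q ↾_U n}` (taken in `[0,1]`). -/
noncomputable def dU (U : Set E) (P Q : Pair E) : ℝ :=
  sInf {x : ℝ | ∃ n : ℕ, restrict U n P = restrict U n Q ∧ x = (1 / 2 : ℝ) ^ n}

noncomputable def dTD (U : Set E) (P Q : TD E) : ℝ := dU U P.pair Q.pair

/-- Sequential composition `P ; Q` on trace/divergence pairs. -/
def seqP (P Q : TD E) : Pair E :=
  let D' := P.D ∪ {x | ∃ t s, t ++ [(none : Ev E)] ∈ P.T ∧ s ∈ Q.D ∧ x = t ++ s}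
  (D' ∪ {s ∈ P.T | (none : Ev E) ∉ s} ∪
     {x | ∃ t s, t ++ [(none : Ev E)] ∈ P.T ∧ s ∈ Q.T ∧ x = t ++ s}, D')

section Aux
variable {U : Set E}

lemma lengthU_append (a b : List (Ev E)) :
    lengthU U (a ++ b) = lengthU U a + lengthU U b := by
  simp [lengthU, List.filter_append]

lemma one_le_lengthU {t : List (Ev E)} {a : E} (ha : a ∈ U) (hm : (some a : Ev E) ∈ t) :
    1 ≤ lengthU U t := by
  have h : (some a : Ev E) ∈ t.filter fun x => decide (∃ b ∈ U, x = some b) := by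
    rw [List.mem_filter]
    exact ⟨hm, by simp only [decide_eq_true_eq]; exact ⟨a, ha, rfl⟩⟩
  have := List.length_pos_iff.mpr (List.ne_nil_of_mem h)
  exact this

lemma validTrace_append {a b : List (Ev E)} (ha : (none : Ev E) ∉ a) (hb : ValidTrace b) :
    ValidTrace (a ++ b) := by
  rcases eq_or_ne b [] with rfl | h
  · intro hmem
    exact ha ((List.dropLast_sublist a).subset (by simpa using hmem))
  · intro hmem
    rw [List.dropLast_append_of_ne_nil h, List.mem_append] at hmem
    exact hmem.elim ha hb

lemma exists_take_lengthU : ∀ (w : List (Ev E)) (m : ℕ), m ≤ lengthU U w →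
    ∃ a b, w = a ++ b ∧ lengthU U a = m := by
  intro w
  induction w with
  | nil =>
    intro m hm
    simp [lengthU] at hm
    exact ⟨[], [], by simp, by simp [lengthU, hm]⟩
  | cons x w ih =>
    intro m hm
    rcases Nat.eq_zero_or_pos m with rfl | hmpos
    · exact ⟨[], x :: w, rfl, by simp [lengthU]⟩
    · have hx : lengthU U (x :: w) = lengthU U [x] + lengthU U w := lengthU_append [x] w
      by_cases hc : ∃ a ∈ U, x = some a
      · have h1 : lengthU U [x] = 1 := by simp [lengthU, hc]
        obtain ⟨a, b, hab, hla⟩ := ih (m - 1) (by omega)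
        refine ⟨x :: a, b, by simp [hab], ?_⟩
        have : lengthU U (x :: a) = lengthU U [x] + lengthU U a := lengthU_append [x] a
        omega
      · have h1 : lengthU U [x] = 0 := by simp [lengthU, hc]
        obtain ⟨a, b, hab, hla⟩ := ih m (by omega)
        refine ⟨x :: a, b, by simp [hab], ?_⟩
        have : lengthU U (x :: a) = lengthU U [x] + lengthU U a := lengthU_append [x] a
        omega

lemma mem_seqT_iff (P Q : TD E) (x : List (Ev E)) :
    x ∈ (seqP P Q).1 ↔
      ((x ∈ P.D ∨ ∃ t s, t ++ [(none : Ev E)] ∈ P.T ∧ s ∈ Q.D ∧ x = t ++ s) ∨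
        (x ∈ P.T ∧ (none : Ev E) ∉ x)) ∨
      ∃ t s, t ++ [(none : Ev E)] ∈ P.T ∧ s ∈ Q.T ∧ x = t ++ s := Iff.rfl

lemma mem_seqD_iff (P Q : TD E) (x : List (Ev E)) :
    x ∈ (seqP P Q).2 ↔
      x ∈ P.D ∨ ∃ t s, t ++ [(none : Ev E)] ∈ P.T ∧ s ∈ Q.D ∧ x = t ++ s := Iff.rfl

lemma mem_restrict_snd_iff (n : ℕ) (X : Pair E) (x : List (Ev E)) :
    x ∈ (restrict U n X).2 ↔ x ∈ X.2 ∨ ∃ s t, s ∈ X.1 ∧ (none : Ev E) ∉ s ∧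
      lengthU U s = n ∧ ValidTrace t ∧ x = s ++ t := Iff.rfl

lemma mem_restrict_fst_iff (n : ℕ) (X : Pair E) (x : List (Ev E)) :
    x ∈ (restrict U n X).1 ↔ x ∈ (restrict U n X).2 ∨ (x ∈ X.1 ∧ lengthU U x ≤ n) := Iff.rfl

lemma noTick_of_tickTrace (P : TD E) {t : List (Ev E)} (h : t ++ [(none : Ev E)] ∈ P.T) :
    (none : Ev E) ∉ t := by
  have := P.valid _ h
  unfold ValidTrace at this
  simpa using this

lemma seqT_prefix_closed (P Q : TD E) (a b : List (Ev E))
    (h : a ++ b ∈ (seqP P Q).1) : a ∈ (seqP P Q).1 := by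
  rw [mem_seqT_iff] at h
  rw [mem_seqT_iff]
  have hsplit : ∀ t s : List (Ev E), t ++ [(none : Ev E)] ∈ P.T → s ∈ Q.T → a ++ b = t ++ s →
      ((a ∈ P.D ∨ ∃ t s, t ++ [(none : Ev E)] ∈ P.T ∧ s ∈ Q.D ∧ a = t ++ s) ∨
        (a ∈ P.T ∧ (none : Ev E) ∉ a)) ∨
      ∃ t s, t ++ [(none : Ev E)] ∈ P.T ∧ s ∈ Q.T ∧ a = t ++ s := by
    intro t s ht hs heq
    rcases List.append_eq_append_iff.mp heq with ⟨a', ht', hb'⟩ | ⟨c', hc', hs'⟩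
    · -- t = a ++ a'
      subst ht'
      have haP : a ∈ P.T := P.prefix_closed a (a' ++ [none]) (by simpa using ht)
      have hna : (none : Ev E) ∉ a := fun hmem =>
        noTick_of_tickTrace P ht (List.mem_append.2 (Or.inl hmem))
      exact Or.inl (Or.inr ⟨haP, hna⟩)
    · -- a = t ++ c', s = c' ++ b
      subst hc'
      exact Or.inr ⟨t, c', ht, Q.prefix_closed c' b (by rw [← hs']; exact hs), rfl⟩
  rcases h with (h | ⟨aP, hna⟩) | ⟨t, s, ht, hs, heq⟩
  · rcases h with h | ⟨t, s, ht, hs, heq⟩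
    · -- a ++ b ∈ P.D
      have habT : a ++ b ∈ P.T := P.d_sub h
      by_cases hna : (none : Ev E) ∈ a
      · -- then b = []
        have hval := P.valid _ habT
        unfold ValidTrace at hval
        rcases eq_or_ne b [] with rfl | hb
        · exact Or.inl (Or.inl (Or.inl (by simpa using h)))
        · exfalso
          apply hval
          rw [List.dropLast_append_of_ne_nil hb]
          exact List.mem_append.2 (Or.inl hna)
      · exact Or.inl (Or.inr ⟨P.prefix_closed a b habT, hna⟩)
    · exact hsplit t s ht (Q.d_sub hs) heq
  · exact Or.inl (Or.inr ⟨P.prefix_closed a b aP, fun hm => hna (List.mem_append.2 (Or.inl hm))⟩)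
  · exact hsplit t s ht hs heq

lemma mem_ext_of (P Q : TD E) (m : ℕ) {w r : List (Ev E)}
    (hw : w ∈ (seqP P Q).1) (hnw : (none : Ev E) ∉ w) (hl : m ≤ lengthU U w)
    (hr : ValidTrace r) :
    ∃ s t, s ∈ (seqP P Q).1 ∧ (none : Ev E) ∉ s ∧ lengthU U s = m ∧ ValidTrace t ∧
      w ++ r = s ++ t := by
  obtain ⟨a, b, hab, hla⟩ := exists_take_lengthU w m hl
  subst hab
  refine ⟨a, b ++ r, seqT_prefix_closed P Q a b hw,
    fun h => hnw (List.mem_append.2 (Or.inl h)), hla,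
    validTrace_append (fun h => hnw (List.mem_append.2 (Or.inr h))) hr, by simp⟩

lemma key_sub (P Q Q' : TD E)
    (hguard : ∀ t : List (Ev E), t ++ [(none : Ev E)] ∈ P.T → ∃ a ∈ U, (some a : Ev E) ∈ t)
    (n : ℕ) (hn : restrict U n Q.pair = restrict U n Q'.pair) :
    (restrict U (n+1) (seqP P Q)).2 ⊆ (restrict U (n+1) (seqP P Q')).2 ∧
    (restrict U (n+1) (seqP P Q)).1 ⊆ (restrict U (n+1) (seqP P Q')).1 := by
  have hg1 : ∀ t : List (Ev E), t ++ [(none : Ev E)] ∈ P.T →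
      1 ≤ lengthU U t ∧ (none : Ev E) ∉ t := by
    intro t ht
    obtain ⟨a, ha, hat⟩ := hguard t ht
    exact ⟨one_le_lengthU ha hat, noTick_of_tickTrace P ht⟩
  have hDn : ∀ s ∈ Q.D, s ∈ Q'.D ∨ ∃ u v, u ∈ Q'.T ∧ (none : Ev E) ∉ u ∧
      lengthU U u = n ∧ ValidTrace v ∧ s = u ++ v := by
    intro s hs
    have h : s ∈ (restrict U n Q'.pair).2 := by rw [← hn]; exact Or.inl hs
    exact h
  have hTn : ∀ s ∈ Q.T, lengthU U s ≤ n →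
      (s ∈ Q'.D ∨ ∃ u v, u ∈ Q'.T ∧ (none : Ev E) ∉ u ∧ lengthU U u = n ∧
        ValidTrace v ∧ s = u ++ v) ∨ (s ∈ Q'.T ∧ lengthU U s ≤ n) := by
    intro s hs hl
    have h : s ∈ (restrict U n Q'.pair).1 := by rw [← hn]; exact Or.inr ⟨hs, hl⟩
    exact h
  have hdiv : ∀ t s : List (Ev E), t ++ [(none : Ev E)] ∈ P.T → s ∈ Q.D →
      t ++ s ∈ (restrict U (n+1) (seqP P Q')).2 := by
    intro t s ht hs
    obtain ⟨h1t, h0t⟩ := hg1 t ht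
    rcases hDn s hs with hs' | ⟨u, v, hu, hnu, hlu, hv, rfl⟩
    · exact Or.inl (Or.inr ⟨t, s, ht, hs', rfl⟩)
    · have hw : t ++ u ∈ (seqP P Q').1 := Or.inr ⟨t, u, ht, hu, rfl⟩
      have hnw : (none : Ev E) ∉ t ++ u := by
        simp only [List.mem_append]; rintro (h | h); exacts [h0t h, hnu h]
      have hlw : n + 1 ≤ lengthU U (t ++ u) := by rw [lengthU_append]; omega
      obtain ⟨s', t', h1, h2, h3, h4, h5⟩ := mem_ext_of P Q' (n+1) hw hnw hlw hv
      exact Or.inr ⟨s', t', h1, h2, h3, h4, by rw [← List.append_assoc]; exact h5⟩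
  have hsnd : (restrict U (n+1) (seqP P Q)).2 ⊆ (restrict U (n+1) (seqP P Q')).2 := by
    rintro x (hx | ⟨s, t, hsT, hns, hls, hvt, rfl⟩)
    · rcases hx with hx | ⟨t, s, ht, hs, rfl⟩
      · exact Or.inl (Or.inl hx)
      · exact hdiv t s ht hs
    · rcases hsT with ((hs | ⟨t', s', ht', hs', rfl⟩) | hs) | ⟨t', s', ht', hs', rfl⟩
      · exact Or.inl (Or.inl (P.div_ext s t hs hns hvt))
      · have hns' : (none : Ev E) ∉ s' := fun h => hns (List.mem_append.2 (Or.inr h))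
        have heq : (t' ++ s') ++ t = t' ++ (s' ++ t) := by simp
        rw [heq]
        exact hdiv t' (s' ++ t) ht' (Q.div_ext s' t hs' hns' hvt)
      · exact Or.inr ⟨s, t, Or.inl (Or.inr hs), hns, hls, hvt, rfl⟩
      · obtain ⟨h1t, h0t⟩ := hg1 t' ht'
        have hls' : lengthU U s' ≤ n := by
          rw [lengthU_append] at hls; omega
        have hns' : (none : Ev E) ∉ s' := fun h => hns (List.mem_append.2 (Or.inr h))
        rcases hTn s' hs' hls' with (hd | ⟨u, v, hu, hnu, hlu, hv, rfl⟩) | ⟨hs'', hls''⟩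
        · have heq : (t' ++ s') ++ t = t' ++ (s' ++ t) := by simp
          rw [heq]
          exact Or.inl (Or.inr ⟨t', s' ++ t, ht', Q'.div_ext s' t hd hns' hvt, rfl⟩)
        · have hw : t' ++ u ∈ (seqP P Q').1 := Or.inr ⟨t', u, ht', hu, rfl⟩
          have hnw : (none : Ev E) ∉ t' ++ u := by
            simp only [List.mem_append]; rintro (h | h); exacts [h0t h, hnu h]
          have hlw : n + 1 ≤ lengthU U (t' ++ u) := by rw [lengthU_append]; omega
          have hnv : (none : Ev E) ∉ v := fun h => hns' (List.mem_append.2 (Or.inr h))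
          obtain ⟨s'', t'', h1, h2, h3, h4, h5⟩ :=
            mem_ext_of P Q' (n+1) hw hnw hlw (validTrace_append hnv hvt)
          refine Or.inr ⟨s'', t'', h1, h2, h3, h4, ?_⟩
          rw [← h5]; simp
        · exact Or.inr ⟨t' ++ s', t, Or.inr ⟨t', s', ht', hs'', rfl⟩, hns, hls, hvt, rfl⟩
  refine ⟨hsnd, ?_⟩
  rintro x (hx | ⟨hxT, hlx⟩)
  · exact Or.inl (hsnd hx)
  · rcases hxT with ((hx | ⟨t, s, ht, hs, rfl⟩) | hx) | ⟨t, s, ht, hs, rfl⟩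
    · exact Or.inl (Or.inl (Or.inl hx))
    · exact Or.inl (hdiv t s ht hs)
    · exact Or.inr ⟨Or.inl (Or.inr hx), hlx⟩
    · obtain ⟨h1t, h0t⟩ := hg1 t ht
      have hls : lengthU U s ≤ n := by rw [lengthU_append] at hlx; omega
      rcases hTn s hs hls with (hd | ⟨u, v, hu, hnu, hlu, hv, rfl⟩) | ⟨hs'', hls'⟩
      · exact Or.inl (Or.inl (Or.inr ⟨t, s, ht, hd, rfl⟩))
      · have hw : t ++ u ∈ (seqP P Q').1 := Or.inr ⟨t, u, ht, hu, rfl⟩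
        have hnw : (none : Ev E) ∉ t ++ u := by
          simp only [List.mem_append]; rintro (h | h); exacts [h0t h, hnu h]
        have hlw : n + 1 ≤ lengthU U (t ++ u) := by rw [lengthU_append]; omega
        obtain ⟨s'', t'', h1, h2, h3, h4, h5⟩ := mem_ext_of P Q' (n+1) hw hnw hlw hv
        exact Or.inl (Or.inr ⟨s'', t'', h1, h2, h3, h4, by
          rw [← List.append_assoc]; exact h5⟩)
      · exact Or.inr ⟨Or.inr ⟨t, s, ht, hs'', rfl⟩, hlx⟩

lemma restrict_zero (R : TD E) :
    restrict U 0 R.pair = ({t | ValidTrace t}, {t | ValidTrace t}) := by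
  have hsnd : (restrict U 0 R.pair).2 = {t : List (Ev E) | ValidTrace t} := by
    apply Set.Subset.antisymm
    · rintro x (hx | ⟨s, t, hs, hns, hls, hvt, rfl⟩)
      · exact R.valid x (R.d_sub hx)
      · exact validTrace_append hns hvt
    · intro x hx
      exact Or.inr ⟨[], x, R.nonempty, by simp, by simp [lengthU], hx, by simp⟩
  have hfst : (restrict U 0 R.pair).1 = {t : List (Ev E) | ValidTrace t} := by
    apply Set.Subset.antisymm
    · rintro x (hx | ⟨hx, -⟩)
      · have h : x ∈ (restrict U 0 R.pair).2 := hx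
        rw [hsnd] at h
        exact h
      · exact R.valid x hx
    · intro x hx
      refine Or.inl ?_
      show x ∈ (restrict U 0 R.pair).2
      rw [hsnd]
      exact hx
  exact Prod.ext hfst hsnd

lemma key_eq (P Q Q' : TD E)
    (hguard : ∀ t : List (Ev E), t ++ [(none : Ev E)] ∈ P.T → ∃ a ∈ U, (some a : Ev E) ∈ t)
    (n : ℕ) (hn : restrict U n Q.pair = restrict U n Q'.pair) :
    restrict U (n+1) (seqP P Q) = restrict U (n+1) (seqP P Q') := by
  obtain ⟨h2, h1⟩ := key_sub P Q Q' hguard n hn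
  obtain ⟨h2', h1'⟩ := key_sub P Q' Q hguard n hn.symm
  exact Prod.ext (Set.Subset.antisymm h1 h1') (Set.Subset.antisymm h2 h2')

end Aux

theorem seq_contractive_right' (U : Set E) (P Q Q' : TD E)
    (hguard : ∀ t : List (Ev E), t ++ [(none : Ev E)] ∈ P.T →
      ∃ a ∈ U, (some a : Ev E) ∈ t) :
    dU U (seqP P Q) (seqP P Q') ≤ (1 / 2 : ℝ) * dU U Q.pair Q'.pair := by
  have hbdd : BddBelow {x : ℝ | ∃ n : ℕ,
      restrict U n (seqP P Q) = restrict U n (seqP P Q') ∧ x = (1 / 2 : ℝ) ^ n} := by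
    refine ⟨0, ?_⟩
    rintro x ⟨n, -, rfl⟩
    positivity
  have hne : {x : ℝ | ∃ n : ℕ,
      restrict U n Q.pair = restrict U n Q'.pair ∧ x = (1 / 2 : ℝ) ^ n}.Nonempty := by
    refine ⟨1, 0, ?_, by norm_num⟩
    rw [restrict_zero Q, restrict_zero Q']
  have hmain : ∀ x ∈ {x : ℝ | ∃ n : ℕ,
      restrict U n Q.pair = restrict U n Q'.pair ∧ x = (1 / 2 : ℝ) ^ n},
      dU U (seqP P Q) (seqP P Q') ≤ (1 / 2 : ℝ) * x := by
    rintro x ⟨n, hn, rfl⟩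
    have hmem : (1 / 2 : ℝ) ^ (n + 1) ∈ {x : ℝ | ∃ n : ℕ,
        restrict U n (seqP P Q) = restrict U n (seqP P Q') ∧ x = (1 / 2 : ℝ) ^ n} :=
      ⟨n + 1, key_eq P Q Q' hguard n hn, rfl⟩
    calc dU U (seqP P Q) (seqP P Q') ≤ (1 / 2 : ℝ) ^ (n + 1) := csInf_le hbdd hmem
    _ = (1 / 2 : ℝ) * (1 / 2 : ℝ) ^ n := by ring
  have h2 : 2 * dU U (seqP P Q) (seqP P Q') ≤ dU U Q.pair Q'.pair := by
    rw [dU]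
    apply le_csInf hne
    rintro x ⟨n, hn, rfl⟩
    have := hmain _ ⟨n, hn, rfl⟩
    rw [dU] at this
    linarith
  linarith

/-- Guarded sequential composition is a contraction in its second argument:
if `P` always communicates an event from `U` before it does a ✓, then
`d_U(P ; Q, P ; Q') ≤ (1/2) · d_U(Q, Q')`. -/
theorem seq_contractive_right (U : Set E) (P Q Q' : TD E)
    (hguard : ∀ t : List (Ev E), t ++ [(none : Ev E)] ∈ P.T →
      ∃ a ∈ U, (some a : Ev E) ∈ t) :
    dU U (seqP P Q) (seqP P Q') ≤ (1 / 2 : ℝ) * dU U Q.pair Q'.pair := by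
  exact seq_contractive_right' U P Q Q' hguard

end CSPLL
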